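/- Let R = (ℤ/2ℤ)[x]/(x³ + x⁴) and let a₀, a₁, a₂, a₃, a₄, a₅ ∈ ℤ/2ℤ be such that ∑_{k=0}^{5} a_k u^k = 0 in R for all u ∈ R (where each a_k is viewed in R via the canonical map ℤ/2ℤ → R). Then a₀ = a₁ = a₂ = a₃ = a₄ = a₅ = 0. Consequently, for the subring R' generated by 1, one has s(R'; R) ≥ 6. -/

import Mathlib

open Polynomial

/-- The quotient ring `R = (ℤ/2ℤ)[x]/(x³ + x⁴)`. -/
abbrev Rg : Type := Polynomial (ZMod 2) ⧸ Ideal.span {(X : Polynomial (ZMod 2)) ^ 3 + X ^ 4}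

/-- The matrix of multiplication by `x` on `R` in the basis `1, x, x², x³`. -/
def Mx : Matrix (Fin 4) (Fin 4) (ZMod 2) := !![0,0,0,0; 1,0,0,0; 0,1,0,0; 0,0,1,1]

noncomputable def phi : Rg →ₐ[ZMod 2] Matrix (Fin 4) (Fin 4) (ZMod 2) :=
  Ideal.Quotient.liftₐ _ (aeval Mx) (by
    intro a ha
    rw [Ideal.mem_span_singleton] at ha
    obtain ⟨c, rfl⟩ := ha
    rw [map_mul]
    have : (aeval Mx) ((X : Polynomial (ZMod 2))^3 + X^4) = 0 := by
      simp [map_add, map_pow, aeval_X]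
      decide
    rw [this, zero_mul])

lemma phi_mk (p : Polynomial (ZMod 2)) : phi (Ideal.Quotient.mk _ p) = aeval Mx p := by
  simp [phi]
  rfl

lemma phi_alg (c : ZMod 2) : phi (algebraMap (ZMod 2) Rg c) = c • 1 := by
  rw [AlgHom.commutes, Algebra.algebraMap_eq_smul_one]

lemma part1 : ∀ a : Fin 6 → ZMod 2,
      (∀ u : Rg, ∑ k : Fin 6, (algebraMap (ZMod 2) Rg (a k)) * u ^ (k : ℕ) = 0) →
      ∀ k, a k = 0 := by
  intro a H
  have aux : ∀ b : Fin 6 → ZMod 2,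
      (∑ k : Fin 6, b k • Mx ^ (k:ℕ) = 0) → (∑ k : Fin 6, b k • (1 + Mx) ^ (k:ℕ) = 0) →
      ∀ k, b k = 0 := by decide
  have key : ∀ q : Polynomial (ZMod 2),
      ∑ k : Fin 6, a k • (aeval Mx q) ^ (k:ℕ) = 0 := by
    intro q
    have h := congrArg phi (H (Ideal.Quotient.mk _ q))
    rw [map_sum, map_zero] at h
    simp only [map_mul, map_pow, phi_alg, phi_mk, smul_mul_assoc, one_mul] at h
    exact h
  have h1 := key X
  have h2 := key (1 + X)
  simp only [aeval_X, map_add, map_one] at h1 h2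
  exact aux a h1 h2

noncomputable def psi : Rg →ₐ[ZMod 2] ZMod 2 :=
  Ideal.Quotient.liftₐ _ (aeval 0) (by
    intro a ha
    rw [Ideal.mem_span_singleton] at ha
    obtain ⟨c, rfl⟩ := ha
    rw [map_mul]
    have : (aeval (0:ZMod 2)) ((X : Polynomial (ZMod 2))^3 + X^4) = 0 := by simp
    rw [this, zero_mul])

lemma hinj (c : ZMod 2) (h : algebraMap (ZMod 2) Rg c = 0) : c = 0 := by
  have := congrArg psi h
  rwa [AlgHom.commutes, map_zero, Algebra.algebraMap_self_apply] at this

lemma Rg_nontrivial : Nontrivial Rg := by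
  refine ⟨1, 0, fun h => ?_⟩
  have := hinj 1 (by rwa [map_one])
  simp at this

lemma hchar2 : (2 : Polynomial (ZMod 2)) = 0 := by
  exact_mod_cast CharP.cast_eq_zero (Polynomial (ZMod 2)) 2

lemma dvd7 (q : Polynomial (ZMod 2)) : (X^3 + X^4 : Polynomial (ZMod 2)) ∣ q^7 - q^3 := by
  have h2 := hchar2
  have hfact : q^7 - q^3 = q^3 * (q-1)^4 := by
    linear_combination (2*q^6 - 3*q^5 + 2*q^4 - q^3) * h2
  have hsplit : (X^3 + X^4 : Polynomial (ZMod 2)) = X^3 * (1 + X) := by ring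
  have hone : (1 + X : Polynomial (ZMod 2)) = X - C 1 := by
    rw [map_one]; linear_combination h2
  rw [hsplit, hfact]
  have hcop : IsCoprime ((X:Polynomial (ZMod 2))^3) (1 + X) :=
    IsCoprime.pow_left ⟨1, 1, by linear_combination X * h2⟩
  refine hcop.mul_dvd ?_ ?_
  · rcases (show ∀ x : ZMod 2, x = 0 ∨ x = 1 from by decide) (q.eval 0) with h | h
    · have : (X : Polynomial (ZMod 2)) ∣ q := by
        have := (dvd_iff_isRoot (p := q) (a := 0)).mpr h
        simpa using this
      exact Dvd.dvd.mul_right (pow_dvd_pow_of_dvd this 3) _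
    · have : (X : Polynomial (ZMod 2)) ∣ q - 1 := by
        have hr : (q - 1).IsRoot 0 := by simp [IsRoot, h]
        have := (dvd_iff_isRoot (p := q - 1) (a := 0)).mpr hr
        simpa using this
      have h3 : (X:Polynomial (ZMod 2))^3 ∣ (q-1)^4 :=
        dvd_trans (pow_dvd_pow _ (by norm_num)) (pow_dvd_pow_of_dvd this 4)
      exact Dvd.dvd.mul_left h3 _
  · rcases (show ∀ x : ZMod 2, x = 0 ∨ x = 1 from by decide) (q.eval 1) with h | h
    · have : (1 + X : Polynomial (ZMod 2)) ∣ q := by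
        rw [hone]; exact (dvd_iff_isRoot (p := q) (a := 1)).mpr h
      exact Dvd.dvd.mul_right (dvd_trans this (dvd_pow_self _ (by norm_num))) _
    · have : (1 + X : Polynomial (ZMod 2)) ∣ q - 1 := by
        rw [hone]
        exact (dvd_iff_isRoot (p := q - 1) (a := 1)).mpr (by simp [IsRoot, h])
      exact Dvd.dvd.mul_left (dvd_trans this (dvd_pow_self _ (by norm_num))) _

lemma pow7 (u : Rg) : u^7 = u^3 := by
  obtain ⟨q, rfl⟩ := Ideal.Quotient.mk_surjective u
  rw [← map_pow, ← map_pow, Ideal.Quotient.eq, Ideal.mem_span_singleton]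
  exact dvd7 q

lemma Rg_two_eq_zero : (1 + 1 : Rg) = 0 := by
  have h : ((1:ZMod 2) + 1) = 0 := by decide
  calc (1+1:Rg) = algebraMap (ZMod 2) Rg (1+1) := by rw [map_add, map_one]
  _ = 0 := by rw [h, map_zero]

open Polynomial in
theorem stmt_12 :
    (∀ a : Fin 6 → ZMod 2,
      (∀ u : Polynomial (ZMod 2) ⧸
            Ideal.span {(X : Polynomial (ZMod 2)) ^ 3 + X ^ 4},
        ∑ k : Fin 6,
          (algebraMap (ZMod 2) (Polynomial (ZMod 2) ⧸
              Ideal.span {(X : Polynomial (ZMod 2)) ^ 3 + X ^ 4}) (a k))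
            * u ^ (k : ℕ) = 0) →
      ∀ k, a k = 0) ∧
    6 ≤ sInf {m : ℕ | ∃ p : Polynomial (Polynomial (ZMod 2) ⧸
          Ideal.span {(X : Polynomial (ZMod 2)) ^ 3 + X ^ 4}),
        (∀ i, p.coeff i ∈ (⊥ : Subring (Polynomial (ZMod 2) ⧸
            Ideal.span {(X : Polynomial (ZMod 2)) ^ 3 + X ^ 4}))) ∧
        p.degree < (m : WithBot ℕ) ∧
        ∀ x : Polynomial (ZMod 2) ⧸
            Ideal.span {(X : Polynomial (ZMod 2)) ^ 3 + X ^ 4},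
          p.eval x = x ^ m} := by
  haveI : Nontrivial Rg := Rg_nontrivial
  constructor
  · exact part1
  · apply le_csInf
    · -- nonempty: m = 7, p = X^3
      refine ⟨7, X^3, ?_, ?_, ?_⟩
      · intro i
        rw [coeff_X_pow]
        split
        · exact one_mem _
        · exact zero_mem _
      · rw [degree_X_pow]
        exact_mod_cast (by norm_num : (3:ℕ) < 7)
      · intro x
        rw [eval_pow, eval_X]
        exact (pow7 x).symm
    · intro m hm
      by_contra hlt
      push_neg at hlt
      obtain ⟨p, hc, hdeg, heval⟩ := hm
      have hm6 : m < 6 := hlt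
      -- extract coefficients into ZMod 2
      have hcz : ∀ k : Fin 6, ∃ c : ZMod 2, algebraMap (ZMod 2) Rg c = p.coeff k := by
        intro k
        obtain ⟨n, hn⟩ := Subring.mem_bot.mp (hc k)
        exact ⟨(n : ZMod 2), by rw [map_intCast]; exact hn⟩
      choose c hcmap using hcz
      set m' : Fin 6 := ⟨m, hm6⟩ with hm'
      set a : Fin 6 → ZMod 2 := fun k => (if k = m' then 1 else 0) + c k with ha
      have hH : ∀ u : Rg, ∑ k : Fin 6, (algebraMap (ZMod 2) Rg (a k)) * u ^ (k : ℕ) = 0 := by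
        intro u
        have hsum : ∑ k : Fin 6, (algebraMap (ZMod 2) Rg (a k)) * u ^ (k : ℕ)
            = (∑ k : Fin 6, (if k = m' then u ^ (k:ℕ) else 0))
              + ∑ k : Fin 6, p.coeff k * u ^ (k : ℕ) := by
          rw [← Finset.sum_add_distrib]
          refine Finset.sum_congr rfl fun k _ => ?_
          rw [ha]
          simp only [map_add, add_mul, hcmap]
          congr 1
          split
          · simp
          · simp
        rw [hsum]
        have h1 : (∑ k : Fin 6, (if k = m' then u ^ (k:ℕ) else 0)) = u ^ m := by
          rw [Finset.sum_ite_eq' Finset.univ m' (fun k => u ^ (k:ℕ))]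
          simp [hm']
        have hnd : p.natDegree < 6 := by
          rcases eq_or_ne p 0 with rfl | hp
          · simp
          · have := (natDegree_lt_iff_degree_lt (n := 6) hp).mpr
              (lt_of_lt_of_le hdeg (by exact_mod_cast hm6.le))
            exact this
        have h2 : ∑ k : Fin 6, p.coeff k * u ^ (k : ℕ) = p.eval u := by
          rw [eval_eq_sum_range' hnd u, ← Fin.sum_univ_eq_sum_range]
        rw [h1, h2, heval u]
        have : u ^ m + u ^ m = (1 + 1) * u ^ m := by ring
        rw [this, Rg_two_eq_zero, zero_mul]
      have h0 := part1 a hH m'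
      have hcoeff : p.coeff m = 0 := coeff_eq_zero_of_degree_lt hdeg
      have hcm : c m' = 0 := hinj _ (by rw [hcmap]; exact hcoeff)
      rw [ha] at h0
      simp [hcm] at h0
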